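/- Let H be a monic lower Hessenberg matrix of index -1 (H_{j,j+1} = 1, H_{j,k} = 0 for k > j+1). Define Y = H X̂ and Ĥ = X̂ Y⁻¹, where X̂ is the transpose of the shift matrix X. Then Y is lower triangular with unit diagonal (hence invertible), H Ĥ = I, and if P is the unique monic lower triangular matrix with H P = P X, then P X̂ = Ĥ P; i.e., the (k+1)-th column of P equals Ĥ times the k-th column of P. -/
import Mathlib


open scoped BigOperators

/-- Product of infinite matrices; the sum is a `tsum`, which reduces to a finite
sum for the banded matrices considered here. -/
noncomputable def matMul (A B : ℕ → ℕ → ℂ) : ℕ → ℕ → ℂ :=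
  fun i k => ∑' j, A i j * B j k

noncomputable def matPow (A : ℕ → ℕ → ℂ) : ℕ → ℕ → ℕ → ℂ
  | 0 => fun i k => if i = k then 1 else 0
  | n + 1 => matMul (matPow A n) A

/-- Substitution of a matrix into a polynomial. -/
noncomputable def matPolyEval (w : Polynomial ℂ) (A : ℕ → ℕ → ℂ) : ℕ → ℕ → ℂ :=
  fun i k => ∑ m ∈ Finset.range (w.natDegree + 1), w.coeff m * matPow A m i k

/-- The shift matrix `X`, with `X_{j,j+1} = 1`. -/
def Xmat : ℕ → ℕ → ℂ := fun i k => if k = i + 1 then 1 else 0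

/-- The transpose `X̂` of the shift matrix. -/
def XhatMat : ℕ → ℕ → ℂ := fun i k => if i = k + 1 then 1 else 0

/-- The identity matrix. -/
def Imat : ℕ → ℕ → ℂ := fun i k => if i = k then 1 else 0

/-- The polynomial given by row `k` of a lower triangular matrix. -/
noncomputable def rowPoly (M : ℕ → ℕ → ℂ) (k : ℕ) : Polynomial ℂ :=
  ∑ j ∈ Finset.range (k + 1), Polynomial.C (M k j) * Polynomial.X ^ j

def LowTri (A : ℕ → ℕ → ℂ) : Prop := ∀ i k : ℕ, k > i → A i k = 0

lemma matMul_eq_sum (A B : ℕ → ℕ → ℂ) (hA : LowTri A) (i k : ℕ) :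
    matMul A B i k = ∑ j ∈ Finset.range (i + 1), A i j * B j k := by
  apply tsum_eq_sum
  intro b hb
  rw [hA i b (by simpa using Nat.lt_of_succ_le (Nat.succ_le_of_lt (by
    simpa [Finset.mem_range, Nat.lt_succ_iff, not_le] using hb)))]
  ring

lemma lowTri_matMul {A B : ℕ → ℕ → ℂ} (hA : LowTri A) (hB : LowTri B) :
    LowTri (matMul A B) := by
  intro i k hk
  rw [matMul_eq_sum A B hA]
  apply Finset.sum_eq_zero
  intro j hj
  rw [hB j k (lt_of_le_of_lt (Finset.mem_range_succ_iff.mp hj) hk)]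
  ring

lemma matMul_assoc_tri {A B : ℕ → ℕ → ℂ} (C : ℕ → ℕ → ℂ)
    (hA : LowTri A) (hB : LowTri B) :
    matMul (matMul A B) C = matMul A (matMul B C) := by
  funext i k
  rw [matMul_eq_sum _ _ (lowTri_matMul hA hB), matMul_eq_sum _ _ hA]
  calc ∑ j ∈ Finset.range (i+1), matMul A B i j * C j k
      = ∑ j ∈ Finset.range (i+1), ∑ l ∈ Finset.range (i+1), A i l * B l j * C j k := by
        refine Finset.sum_congr rfl fun j _ => ?_
        rw [matMul_eq_sum A B hA, Finset.sum_mul]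
    _ = ∑ l ∈ Finset.range (i+1), ∑ j ∈ Finset.range (i+1), A i l * B l j * C j k :=
        Finset.sum_comm
    _ = ∑ l ∈ Finset.range (i+1), A i l * matMul B C l k := by
        refine Finset.sum_congr rfl fun l hl => ?_
        rw [matMul_eq_sum B C hB, Finset.mul_sum]
        symm
        refine Finset.sum_subset (Finset.range_subset_range.mpr (Nat.succ_le_succ (Finset.mem_range_succ_iff.mp hl))) ?_ |>.trans ?_
        · intro x _ hx
          rw [hB l x (by simpa [Finset.mem_range, Nat.lt_succ_iff, not_le] using hx)]
          ring
        · exact Finset.sum_congr rfl fun j _ => by ring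

lemma matMul_Imat (A : ℕ → ℕ → ℂ) : matMul A Imat = A := by
  funext i k
  have : ∀ j : ℕ, j ≠ k → A i j * Imat j k = 0 := by
    intro j hj; simp [Imat, hj]
  rw [matMul, tsum_eq_single k this]
  simp [Imat]

lemma Imat_matMul (A : ℕ → ℕ → ℂ) : matMul Imat A = A := by
  funext i k
  have : ∀ j : ℕ, j ≠ i → Imat i j * A j k = 0 := by
    intro j hj; simp [Imat, hj.symm]
  rw [matMul, tsum_eq_single i this]
  simp [Imat]

noncomputable def triInvR (Y : ℕ → ℕ → ℂ) : ℕ → ℕ → ℂ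
  | i, k =>
    if i ≤ k then (if i = k then 1 else 0)
    else -(∑ j ∈ (Finset.Ico k i).attach, Y i j.1 * triInvR Y j.1 k)
  termination_by i k => i
  decreasing_by exact (Finset.mem_Ico.mp j.2).2

noncomputable def triInvL (Y : ℕ → ℕ → ℂ) : ℕ → ℕ → ℂ
  | i, k =>
    if i ≤ k then (if i = k then 1 else 0)
    else -(∑ j ∈ (Finset.Ioc k i).attach, triInvL Y i j.1 * Y j.1 k)
  termination_by i k => i - k
  decreasing_by
    have h := Finset.mem_Ioc.mp j.2
    omega

lemma triInvR_eq (Y : ℕ → ℕ → ℂ) (i k : ℕ) :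
    triInvR Y i k = if i ≤ k then (if i = k then 1 else 0)
      else -(∑ j ∈ Finset.Ico k i, Y i j * triInvR Y j k) := by
  rw [triInvR]
  split
  · rfl
  · exact congrArg Neg.neg (Finset.sum_attach _ (fun j => Y i j * triInvR Y j k))

lemma triInvL_eq (Y : ℕ → ℕ → ℂ) (i k : ℕ) :
    triInvL Y i k = if i ≤ k then (if i = k then 1 else 0)
      else -(∑ j ∈ Finset.Ioc k i, triInvL Y i j * Y j k) := by
  rw [triInvL]
  split
  · rfl
  · exact congrArg Neg.neg (Finset.sum_attach _ (fun j => triInvL Y i j * Y j k))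

lemma lowTri_triInvR (Y : ℕ → ℕ → ℂ) : LowTri (triInvR Y) := by
  intro i k hk
  rw [triInvR_eq, if_pos (le_of_lt hk), if_neg (Nat.ne_of_lt hk)]

lemma lowTri_triInvL (Y : ℕ → ℕ → ℂ) : LowTri (triInvL Y) := by
  intro i k hk
  rw [triInvL_eq, if_pos (le_of_lt hk), if_neg (Nat.ne_of_lt hk)]

lemma diag_triInvR (Y : ℕ → ℕ → ℂ) (i : ℕ) : triInvR Y i i = 1 := by
  rw [triInvR_eq]; simp

lemma matMul_triInvR (Y : ℕ → ℕ → ℂ) (hY : LowTri Y) (hd : ∀ i, Y i i = 1) :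
    matMul Y (triInvR Y) = Imat := by
  funext i k
  rw [matMul_eq_sum _ _ hY]
  by_cases hk : k ≤ i
  · have hsub : Finset.Ico k (i+1) ⊆ Finset.range (i+1) := by
      intro x hx
      simp only [Finset.mem_Ico, Finset.mem_range] at *
      omega
    rw [← Finset.sum_subset hsub (by
      intro x hx hx'
      simp only [Finset.mem_range, Finset.mem_Ico, not_and, not_le] at hx hx'
      rw [lowTri_triInvR Y x k (by omega)]
      ring)]
    rw [Finset.sum_Ico_succ_top (by omega), hd i, one_mul]
    rcases eq_or_lt_of_le hk with h | h
    · subst h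
      simp [Imat, diag_triInvR]
    · rw [triInvR_eq Y i k, if_neg (by omega), Imat, if_neg (by omega)]
      ring
  · rw [Finset.sum_eq_zero, Imat, if_neg (by omega)]
    intro j hj
    rw [lowTri_triInvR Y j k (by simp only [Finset.mem_range] at hj; omega)]
    ring

lemma triInvL_matMul (Y : ℕ → ℕ → ℂ) (hY : LowTri Y) (hd : ∀ i, Y i i = 1) :
    matMul (triInvL Y) Y = Imat := by
  funext i k
  rw [matMul_eq_sum _ _ (lowTri_triInvL Y)]
  by_cases hk : k ≤ i
  · have hsub : Finset.Ico k (i+1) ⊆ Finset.range (i+1) := by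
      intro x hx
      simp only [Finset.mem_Ico, Finset.mem_range] at *
      omega
    rw [← Finset.sum_subset hsub (by
      intro x hx hx'
      simp only [Finset.mem_range, Finset.mem_Ico, not_and, not_le] at hx hx'
      rw [hY x k (by omega)]
      ring)]
    have : Finset.Ico k (i+1) = insert k (Finset.Ioc k i) := by
      ext x
      simp only [Finset.mem_Ico, Finset.mem_insert, Finset.mem_Ioc]
      omega
    rw [this, Finset.sum_insert (by simp), hd k, mul_one]
    rcases eq_or_lt_of_le hk with h | h
    · subst h
      rw [Finset.Ioc_self, Finset.sum_empty, add_zero, Imat, if_pos rfl,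
        triInvL_eq, if_pos le_rfl, if_pos rfl]
    · rw [triInvL_eq Y i k, if_neg (by omega), Imat, if_neg (by omega)]
      ring
  · rw [Finset.sum_eq_zero, Imat, if_neg (by omega)]
    intro j hj
    rw [hY j k (by simp only [Finset.mem_range] at hj; omega)]
    ring

lemma triInvR_matMul (Y : ℕ → ℕ → ℂ) (hY : LowTri Y) (hd : ∀ i, Y i i = 1) :
    matMul (triInvR Y) Y = Imat := by
  have hL : triInvL Y = triInvR Y := by
    have := matMul_assoc_tri (C := triInvR Y) (lowTri_triInvL Y) hY
    rw [triInvL_matMul Y hY hd, matMul_triInvR Y hY hd, Imat_matMul, matMul_Imat] at this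
    exact this.symm
  rw [← hL, triInvL_matMul Y hY hd]

theorem stmt19 (H : ℕ → ℕ → ℂ)
    (hH0 : ∀ j k : ℕ, k > j + 1 → H j k = 0)
    (hH1 : ∀ j : ℕ, H j (j + 1) = 1) :
    let Y := matMul H XhatMat
    (∀ i k : ℕ, k > i → Y i k = 0) ∧ (∀ i : ℕ, Y i i = 1) ∧
    ∃ Yinv : ℕ → ℕ → ℂ,
      (∀ i k : ℕ, k > i → Yinv i k = 0) ∧
      matMul Y Yinv = Imat ∧ matMul Yinv Y = Imat ∧
      matMul H (matMul XhatMat Yinv) = Imat ∧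
      (∀ P : ℕ → ℕ → ℂ,
        (∀ i k : ℕ, k > i → P i k = 0) → (∀ i : ℕ, P i i = 1) →
        matMul H P = matMul P Xmat →
        matMul P XhatMat = matMul (matMul XhatMat Yinv) P) := by
  intro Y
  have hYentry : ∀ i k : ℕ, Y i k = H i (k + 1) := by
    intro i k
    have h : ∀ j : ℕ, j ≠ k + 1 → H i j * XhatMat j k = 0 := by
      intro j hj
      simp only [XhatMat]
      rw [if_neg hj, mul_zero]
    show matMul H XhatMat i k = _
    rw [matMul, tsum_eq_single (k+1) h]
    simp [XhatMat]
  have hYtri : LowTri Y := by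
    intro i k hk
    rw [hYentry]
    exact hH0 i (k+1) (by omega)
  have hYd : ∀ i : ℕ, Y i i = 1 := fun i => by rw [hYentry]; exact hH1 i
  set Yinv := triInvR Y with hYinv
  have hYinvTri : LowTri Yinv := lowTri_triInvR Y
  have hR : matMul Y Yinv = Imat := matMul_triInvR Y hYtri hYd
  have hL : matMul Yinv Y = Imat := triInvR_matMul Y hYtri hYd
  have hHhat0 : ∀ k : ℕ, matMul XhatMat Yinv 0 k = 0 := by
    intro k
    have h : ∀ j : ℕ, XhatMat 0 j * Yinv j k = 0 := by
      intro j
      simp only [XhatMat]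
      rw [if_neg (by omega), zero_mul]
    rw [matMul]
    rw [tsum_congr h, tsum_zero]
  have hHhatS : ∀ m k : ℕ, matMul XhatMat Yinv (m+1) k = Yinv m k := by
    intro m k
    have h : ∀ j : ℕ, j ≠ m → XhatMat (m+1) j * Yinv j k = 0 := by
      intro j hj
      simp only [XhatMat]
      rw [if_neg (by omega), zero_mul]
    rw [matMul, tsum_eq_single m h]
    simp [XhatMat]
  have hHHhat : matMul H (matMul XhatMat Yinv) = Imat := by
    funext i k
    have h1 : matMul H (matMul XhatMat Yinv) i k
        = ∑ j ∈ Finset.range (i+2), H i j * matMul XhatMat Yinv j k := by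
      apply tsum_eq_sum
      intro b hb
      rw [hH0 i b (by simp only [Finset.mem_range, not_lt] at hb; omega), zero_mul]
    rw [h1, Finset.sum_range_succ', hHhat0 k, mul_zero, add_zero]
    have h2 : ∀ j ∈ Finset.range (i+1), H i (j+1) * matMul XhatMat Yinv (j+1) k
        = Y i j * Yinv j k := by
      intro j _
      rw [hHhatS, hYentry]
    rw [Finset.sum_congr rfl h2, ← matMul_eq_sum Y Yinv hYtri, hR]
  refine ⟨hYtri, hYd, Yinv, hYinvTri, hR, hL, hHHhat, ?_⟩
  intro P hPtri hPd hHP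
  have hPX : ∀ i k : ℕ, matMul P XhatMat i k = P i (k+1) := by
    intro i k
    have h : ∀ j : ℕ, j ≠ k + 1 → P i j * XhatMat j k = 0 := by
      intro j hj
      simp only [XhatMat]
      rw [if_neg hj, mul_zero]
    rw [matMul, tsum_eq_single (k+1) h]
    simp [XhatMat]
  set P' : ℕ → ℕ → ℂ := fun i k => P (i+1) (k+1) with hP'
  have hP'tri : LowTri P' := fun i k hk => hPtri _ _ (by omega)
  have hYP' : matMul Y P' = P := by
    funext m k
    rw [matMul_eq_sum _ _ hYtri]
    have h1 : matMul H P m (k+1) = ∑ j ∈ Finset.range (m+2), H m j * P j (k+1) := by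
      apply tsum_eq_sum
      intro b hb
      rw [hH0 m b (by simp only [Finset.mem_range, not_lt] at hb; omega), zero_mul]
    have h2 : matMul P Xmat m (k+1) = P m k := by
      have h : ∀ j : ℕ, j ≠ k → P m j * Xmat j (k+1) = 0 := by
        intro j hj
        simp only [Xmat]
        rw [if_neg (by omega), mul_zero]
      rw [matMul, tsum_eq_single k h]
      simp [Xmat]
    have h3 : ∑ j ∈ Finset.range (m+2), H m j * P j (k+1)
        = ∑ j ∈ Finset.range (m+1), Y m j * P' j k := by
      rw [Finset.sum_range_succ', hPtri 0 (k+1) (by omega), mul_zero, add_zero]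
      exact Finset.sum_congr rfl fun j _ => by rw [hYentry]
    rw [h3.symm, ← h1, hHP, h2]
  have hYinvP : matMul Yinv P = P' := by
    calc matMul Yinv P = matMul Yinv (matMul Y P') := by rw [hYP']
    _ = matMul (matMul Yinv Y) P' := (matMul_assoc_tri P' hYinvTri hYtri).symm
    _ = P' := by rw [hL, Imat_matMul]
  funext i k
  rw [hPX]
  cases i with
  | zero =>
    have h : ∀ j : ℕ, matMul XhatMat Yinv 0 j * P j k = 0 := by
      intro j
      rw [hHhat0 j, zero_mul]
    rw [matMul, tsum_congr h, tsum_zero]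
    exact hPtri 0 (k+1) (by omega)
  | succ m =>
    have h : ∀ j : ℕ, matMul XhatMat Yinv (m+1) j * P j k = Yinv m j * P j k := by
      intro j
      rw [hHhatS]
    show P' m k = _
    rw [matMul, tsum_congr h, ← matMul, hYinvP]
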